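/- Let M be a real symmetric n×n matrix indexed by a set I = I₁ ∪ I₂ with I₁ ∩ I₂ = {v}, such that M[i,j] = 0 whenever i ∈ I₁ \ {v} and j ∈ I₂ \ {v}, and M[v,v] = 1. Suppose the principal submatrices M[I₁\{v}], M[I₂\{v}] are nonsingular. Then det(M) / det(M[I\{v}]) = det(M[I₁]) / det(M[I₁\{v}]) + det(M[I₂]) / det(M[I₂\{v}]) − 1. -/

import Mathlib

open Matrix

/-- Principal submatrix of `M` on the index set `J`. -/
def pminor {I : Type*} [DecidableEq I] (M : Matrix I I ℝ) (J : Finset I) :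
    Matrix J J ℝ :=
  M.submatrix (fun i => (i : I)) (fun i => (i : I))

lemma det_unit_aux (X : Matrix Unit Unit ℝ) : X.det = X () () := Matrix.det_unique X

/-- Abstract (already block-decomposed) form of Vinberg's local determinant formula. -/
lemma aux_local_det {α β : Type*} [Fintype α] [Fintype β] [DecidableEq α] [DecidableEq β]
    (A₁ : Matrix α α ℝ) (A₂ : Matrix β β ℝ) (b₁ : Matrix α Unit ℝ) (b₂ : Matrix β Unit ℝ)
    (c₁ : Matrix Unit α ℝ) (c₂ : Matrix Unit β ℝ)
    (h1 : A₁.det ≠ 0) (h2 : A₂.det ≠ 0) :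
    (fromBlocks (fromBlocks A₁ 0 0 A₂) (fromRows b₁ b₂) (fromCols c₁ c₂) 1).det /
        (fromBlocks A₁ 0 0 A₂).det =
      (fromBlocks A₁ b₁ c₁ 1).det / A₁.det +
        (fromBlocks A₂ b₂ c₂ 1).det / A₂.det - 1 := by
  haveI : Invertible A₁ := A₁.invertibleOfIsUnitDet (isUnit_iff_ne_zero.2 h1)
  haveI : Invertible A₂ := A₂.invertibleOfIsUnitDet (isUnit_iff_ne_zero.2 h2)
  haveI : Invertible (fromBlocks A₁ (0 : Matrix α β ℝ) 0 A₂) :=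
    fromBlocksZero₂₁Invertible A₁ 0 A₂
  have hinv : ⅟ (fromBlocks A₁ (0 : Matrix α β ℝ) 0 A₂) =
      fromBlocks (⅟ A₁) 0 0 (⅟ A₂) := by
    rw [invOf_fromBlocks_zero₂₁_eq]
    simp
  rw [det_fromBlocks₁₁ (A := fromBlocks A₁ 0 0 A₂),
    det_fromBlocks₁₁ (A := A₁) (B := b₁) (C := c₁),
    det_fromBlocks₁₁ (A := A₂) (B := b₂) (C := c₂), hinv, det_fromBlocks_zero₂₁]
  rw [fromCols_mul_fromBlocks, fromCols_mul_fromRows]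
  simp only [Matrix.mul_zero, Matrix.zero_mul, add_zero, zero_add, Matrix.add_mul]
  rw [det_unit_aux, det_unit_aux, det_unit_aux]
  simp only [Matrix.sub_apply, Matrix.add_apply, Matrix.one_apply_eq]
  set s₁ : ℝ := (c₁ * ⅟A₁ * b₁) () ()
  set s₂ : ℝ := (c₂ * ⅟A₂ * b₂) () ()
  field_simp
  ring

theorem local_determinant_common_vertex
    {I : Type*} [Fintype I] [DecidableEq I] (M : Matrix I I ℝ)
    (I₁ I₂ : Finset I) (v : I)
    (hsym : M.IsSymm)
    (hunion : I₁ ∪ I₂ = Finset.univ)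
    (hinter : I₁ ∩ I₂ = {v})
    (hzero : ∀ i ∈ I₁, i ≠ v → ∀ j ∈ I₂, j ≠ v → M i j = 0)
    (hvv : M v v = 1)
    (h1 : (pminor M (I₁.erase v)).det ≠ 0)
    (h2 : (pminor M (I₂.erase v)).det ≠ 0) :
    M.det / (pminor M (Finset.univ.erase v)).det =
      (pminor M I₁).det / (pminor M (I₁.erase v)).det +
        (pminor M I₂).det / (pminor M (I₂.erase v)).det - 1 := by
  classical
  have hv12 : v ∈ I₁ ∩ I₂ := hinter ▸ Finset.mem_singleton_self v
  have hv1 : v ∈ I₁ := Finset.mem_of_mem_inter_left hv12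
  have hv2 : v ∈ I₂ := Finset.mem_of_mem_inter_right hv12
  have hdisj : ∀ i : I, i ∈ I₁.erase v → i ∉ I₂.erase v := by
    intro i ha hb
    have : i ∈ I₁ ∩ I₂ :=
      Finset.mem_inter.2 ⟨Finset.mem_of_mem_erase ha, Finset.mem_of_mem_erase hb⟩
    rw [hinter, Finset.mem_singleton] at this
    exact Finset.ne_of_mem_erase ha this
  have hcov : ∀ i : I, i ≠ v → i ∈ I₁.erase v ∨ i ∈ I₂.erase v := by
    intro i hne
    have hi : i ∈ I₁ ∪ I₂ := hunion ▸ Finset.mem_univ i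
    rcases Finset.mem_union.1 hi with h | h
    · exact Or.inl (Finset.mem_erase.2 ⟨hne, h⟩)
    · exact Or.inr (Finset.mem_erase.2 ⟨hne, h⟩)
  set A₁ : Matrix (I₁.erase v) (I₁.erase v) ℝ := pminor M (I₁.erase v) with hA₁def
  set A₂ : Matrix (I₂.erase v) (I₂.erase v) ℝ := pminor M (I₂.erase v) with hA₂def
  set b₁ : Matrix (I₁.erase v) Unit ℝ := Matrix.of fun i _ => M i v with hb₁def
  set b₂ : Matrix (I₂.erase v) Unit ℝ := Matrix.of fun i _ => M i v with hb₂def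
  set c₁ : Matrix Unit (I₁.erase v) ℝ := Matrix.of fun _ j => M v j with hc₁def
  set c₂ : Matrix Unit (I₂.erase v) ℝ := Matrix.of fun _ j => M v j with hc₂def
  -- the equivalence splitting `I₁`
  let e₁ : (I₁.erase v : Finset I) ⊕ Unit ≃ (I₁ : Finset I) :=
    { toFun := Sum.elim (fun a => ⟨a, Finset.mem_of_mem_erase a.2⟩) (fun _ => ⟨v, hv1⟩)
      invFun := fun i => if h : (i : I) ∈ I₁.erase v then Sum.inl ⟨i, h⟩ else Sum.inr ()
      left_inv := by
        rintro (a | u)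
        · exact dif_pos a.2
        · exact dif_neg (Finset.notMem_erase v I₁)
      right_inv := by
        intro i
        by_cases h : (i : I) ∈ I₁.erase v
        · simp only [dif_pos h, Sum.elim_inl]
        · simp only [dif_neg h, Sum.elim_inr]
          have hiv : (i : I) = v := by
            by_contra hne
            exact h (Finset.mem_erase.2 ⟨hne, i.2⟩)
          exact Subtype.ext hiv.symm }
  -- the equivalence splitting `I₂`
  let e₂ : (I₂.erase v : Finset I) ⊕ Unit ≃ (I₂ : Finset I) :=
    { toFun := Sum.elim (fun a => ⟨a, Finset.mem_of_mem_erase a.2⟩) (fun _ => ⟨v, hv2⟩)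
      invFun := fun i => if h : (i : I) ∈ I₂.erase v then Sum.inl ⟨i, h⟩ else Sum.inr ()
      left_inv := by
        rintro (a | u)
        · exact dif_pos a.2
        · exact dif_neg (Finset.notMem_erase v I₂)
      right_inv := by
        intro i
        by_cases h : (i : I) ∈ I₂.erase v
        · simp only [dif_pos h, Sum.elim_inl]
        · simp only [dif_neg h, Sum.elim_inr]
          have hiv : (i : I) = v := by
            by_contra hne
            exact h (Finset.mem_erase.2 ⟨hne, i.2⟩)
          exact Subtype.ext hiv.symm }
  -- the equivalence splitting `univ.erase v`
  let e' : ((I₁.erase v : Finset I) ⊕ (I₂.erase v : Finset I)) ≃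
      ((Finset.univ.erase v : Finset I)) :=
    { toFun := Sum.elim
        (fun a => ⟨a, Finset.mem_erase.2 ⟨Finset.ne_of_mem_erase a.2, Finset.mem_univ _⟩⟩)
        (fun b => ⟨b, Finset.mem_erase.2 ⟨Finset.ne_of_mem_erase b.2, Finset.mem_univ _⟩⟩)
      invFun := fun i =>
        if h : (i : I) ∈ I₁.erase v then Sum.inl ⟨i, h⟩
        else Sum.inr ⟨i, ((hcov i (Finset.ne_of_mem_erase i.2)).resolve_left h)⟩
      left_inv := by
        rintro (a | b)
        · exact dif_pos a.2
        · exact dif_neg (fun h => hdisj _ h b.2)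
      right_inv := by
        intro i
        by_cases h : (i : I) ∈ I₁.erase v
        · simp only [dif_pos h, Sum.elim_inl]
        · simp only [dif_neg h, Sum.elim_inr] }
  -- the equivalence splitting `I`
  let e : (((I₁.erase v : Finset I) ⊕ (I₂.erase v : Finset I)) ⊕ Unit) ≃ I :=
    { toFun := Sum.elim (Sum.elim (fun a => (a : I)) (fun b => (b : I))) (fun _ => v)
      invFun := fun i =>
        if h : i ∈ I₁.erase v then Sum.inl (Sum.inl ⟨i, h⟩)
        else if h2 : i ∈ I₂.erase v then Sum.inl (Sum.inr ⟨i, h2⟩)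
        else Sum.inr ()
      left_inv := by
        rintro ((a | b) | u)
        · exact dif_pos a.2
        · exact (dif_neg (fun h => hdisj _ h b.2)).trans (dif_pos b.2)
        · exact (dif_neg (Finset.notMem_erase v I₁)).trans
            (dif_neg (Finset.notMem_erase v I₂))
      right_inv := by
        intro i
        by_cases h : i ∈ I₁.erase v
        · simp only [dif_pos h, Sum.elim_inl]
        · simp only [dif_neg h]
          by_cases h2 : i ∈ I₂.erase v
          · simp only [dif_pos h2, Sum.elim_inl, Sum.elim_inr]
          · simp only [dif_neg h2, Sum.elim_inr]
            by_contra hne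
            rcases hcov i (fun hiv => hne (hiv ▸ rfl)) with hh | hh
            · exact h hh
            · exact h2 hh }
  have hsymm : ∀ i j : I, M j i = M i j := fun i j => hsym.apply i j
  have hz1 : ∀ (a : (I₁.erase v : Finset I)) (b : (I₂.erase v : Finset I)),
      M (a : I) (b : I) = 0 := fun a b =>
    hzero a (Finset.mem_of_mem_erase a.2) (Finset.ne_of_mem_erase a.2)
      b (Finset.mem_of_mem_erase b.2) (Finset.ne_of_mem_erase b.2)
  have hz2 : ∀ (a : (I₁.erase v : Finset I)) (b : (I₂.erase v : Finset I)),
      M (b : I) (a : I) = 0 := fun a b => (hsymm a b).trans (hz1 a b)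
  -- identification of the whole matrix
  have hM : M.submatrix e e =
      fromBlocks (fromBlocks A₁ 0 0 A₂) (fromRows b₁ b₂) (fromCols c₁ c₂) 1 := by
    ext x y
    rcases x with ((a | b) | u) <;> rcases y with ((a' | b') | u') <;>
      simp only [Matrix.submatrix_apply, Equiv.coe_fn_mk, Sum.elim_inl, Sum.elim_inr,
        Matrix.fromBlocks_apply₁₁, Matrix.fromBlocks_apply₁₂, Matrix.fromBlocks_apply₂₁,
        Matrix.fromBlocks_apply₂₂, Matrix.fromRows_apply_inl, Matrix.fromRows_apply_inr,
        Matrix.fromCols_apply_inl, Matrix.fromCols_apply_inr,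
        Matrix.zero_apply, Matrix.one_apply_eq, e] <;>
      first
        | rfl
        | exact hvv
        | exact hz1 _ _
        | exact hz2 _ _
  have hM₁ : (pminor M I₁).submatrix e₁ e₁ = fromBlocks A₁ b₁ c₁ 1 := by
    ext x y
    rcases x with (a | u) <;> rcases y with (a' | u') <;>
      simp only [Matrix.submatrix_apply, Equiv.coe_fn_mk, Sum.elim_inl, Sum.elim_inr,
        Matrix.fromBlocks_apply₁₁, Matrix.fromBlocks_apply₁₂, Matrix.fromBlocks_apply₂₁,
        Matrix.fromBlocks_apply₂₂, Matrix.one_apply_eq, pminor, e₁] <;>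
      first
        | rfl
        | exact hvv
  have hM₂ : (pminor M I₂).submatrix e₂ e₂ = fromBlocks A₂ b₂ c₂ 1 := by
    ext x y
    rcases x with (a | u) <;> rcases y with (a' | u') <;>
      simp only [Matrix.submatrix_apply, Equiv.coe_fn_mk, Sum.elim_inl, Sum.elim_inr,
        Matrix.fromBlocks_apply₁₁, Matrix.fromBlocks_apply₁₂, Matrix.fromBlocks_apply₂₁,
        Matrix.fromBlocks_apply₂₂, Matrix.one_apply_eq, pminor, e₂] <;>
      first
        | rfl
        | exact hvv
  have hM' : (pminor M (Finset.univ.erase v)).submatrix e' e' = fromBlocks A₁ 0 0 A₂ := by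
    ext x y
    rcases x with (a | b) <;> rcases y with (a' | b') <;>
      simp only [Matrix.submatrix_apply, Equiv.coe_fn_mk, Sum.elim_inl, Sum.elim_inr,
        Matrix.fromBlocks_apply₁₁, Matrix.fromBlocks_apply₁₂, Matrix.fromBlocks_apply₂₁,
        Matrix.fromBlocks_apply₂₂, Matrix.zero_apply, pminor, e'] <;>
      first
        | rfl
        | exact hz1 _ _
        | exact hz2 _ _
  have d0 : M.det =
      (fromBlocks (fromBlocks A₁ 0 0 A₂) (fromRows b₁ b₂) (fromCols c₁ c₂) 1).det := by
    rw [← hM, Matrix.det_submatrix_equiv_self]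
  have d1 : (pminor M I₁).det = (fromBlocks A₁ b₁ c₁ 1).det := by
    rw [← hM₁, Matrix.det_submatrix_equiv_self]
  have d2 : (pminor M I₂).det = (fromBlocks A₂ b₂ c₂ 1).det := by
    rw [← hM₂, Matrix.det_submatrix_equiv_self]
  have d' : (pminor M (Finset.univ.erase v)).det = (fromBlocks A₁ 0 0 A₂).det := by
    rw [← hM', Matrix.det_submatrix_equiv_self]
  rw [d0, d1, d2, d']
  exact aux_local_det A₁ A₂ b₁ b₂ c₁ c₂ h1 h2
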